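/- Let α be strictly increasing with α_n > 1 and α_n → ∞, and suppose S_1(α) := {s ∈ ℝ : Σ_{n=1}^∞ e^{α_n}/n^s < ∞} is non-empty. Then (log n)/α_n does not tend to 0 as n → ∞ (so Λ₀(α) is not nuclear), and inf_{k≥1} s₀(k) = 1, where s₀(k) := inf S_k(α) and S_k(α) := {s ∈ ℝ : Σ_{n=1}^∞ e^{α_n/k}/n^s < ∞}. -/
import Mathlib


open Filter Topology

noncomputable section

lemma summable_aux {t : ℝ} (ht : t < -1) :
    Summable (fun n : ℕ => ((n : ℝ) + 1) ^ t) := by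
  have h : Summable (fun n : ℕ => 1 / (n : ℝ) ^ (-t)) :=
    Real.summable_one_div_nat_rpow.mpr (by linarith)
  have h2 := (summable_nat_add_iff 1).mpr h
  refine h2.congr fun n => ?_
  push_cast
  rw [Real.rpow_neg (by positivity), one_div, inv_inv]

/-- `S_k(α) = {s ∈ ℝ : ∑ₙ e^{α_n/k} / n^s < ∞}` (again `k : Nat` represents `k+1`). -/
def Sk (a : ℕ → ℝ) (k : ℕ) : Set ℝ :=
  {s : ℝ | Summable fun n : ℕ => Real.exp (a n / ((k : ℝ) + 1)) / ((n : ℝ) + 1) ^ s}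

/-- if `S_1(α) ≠ ∅` then `(log n)/α_n` does not tend to `0` (so
`Λ₀(α)` is not nuclear) and `inf_{k ≥ 1} s₀(k) = 1` where `s₀(k) = inf S_k(α)`.
(`Sk a 0` is `S_1(α)` because of the index shift.) -/
theorem stmt12 (a : ℕ → ℝ) (hmono : StrictMono a) (h1 : ∀ n, 1 < a n)
    (htop : Tendsto a atTop atTop) (hS : (Sk a 0).Nonempty) :
    ¬ Tendsto (fun n : ℕ => Real.log ((n : ℝ) + 1) / a n) atTop (𝓝 0) ∧
    (⨅ k : ℕ, sInf (Sk a k)) = 1 := by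
  obtain ⟨s, hs⟩ := hS
  have hs' : Summable fun n : ℕ => Real.exp (a n) / ((n : ℝ) + 1) ^ s := by
    simpa [Sk] using hs
  set C := ∑' n : ℕ, Real.exp (a n) / ((n : ℝ) + 1) ^ s with hCdef
  have hterm_nonneg : ∀ n : ℕ, 0 ≤ Real.exp (a n) / ((n : ℝ) + 1) ^ s :=
    fun n => by positivity
  have hC : ∀ n : ℕ, Real.exp (a n) / ((n : ℝ) + 1) ^ s ≤ C :=
    fun n => Summable.le_tsum hs' n (fun m _ => hterm_nonneg m)
  have hCpos : 0 < C := lt_of_lt_of_le (by positivity) (hC 0)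
  have hbound : ∀ n : ℕ, Real.exp (a n) ≤ C * ((n : ℝ) + 1) ^ s := by
    intro n
    have hp : (0 : ℝ) < ((n : ℝ) + 1) ^ s := by positivity
    have := mul_le_mul_of_nonneg_right (hC n) hp.le
    calc Real.exp (a n) = Real.exp (a n) / ((n : ℝ) + 1) ^ s * ((n : ℝ) + 1) ^ s := by
          field_simp
      _ ≤ C * ((n : ℝ) + 1) ^ s := this
  set t := max s 1 with htdef
  have ht : (0 : ℝ) < t := lt_of_lt_of_le one_pos (le_max_right s 1)
  have hlogb : ∀ n : ℕ, a n ≤ Real.log C + t * Real.log ((n : ℝ) + 1) := by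
    intro n
    have hn1 : (0 : ℝ) < (n : ℝ) + 1 := by positivity
    have h1n : (1 : ℝ) ≤ (n : ℝ) + 1 := by
      have := Nat.cast_nonneg (α := ℝ) n; linarith
    have h2 : Real.exp (a n) ≤ C * ((n : ℝ) + 1) ^ t := by
      refine (hbound n).trans ?_
      have : ((n : ℝ) + 1) ^ s ≤ ((n : ℝ) + 1) ^ t :=
        Real.rpow_le_rpow_of_exponent_le h1n (le_max_left s 1)
      exact mul_le_mul_of_nonneg_left this hCpos.le
    rw [← Real.exp_le_exp, Real.exp_add, Real.exp_log hCpos, mul_comm t,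
      ← Real.rpow_def_of_pos hn1]
    exact h2
  constructor
  · intro hten
    have h2t : (0 : ℝ) < 2 * t := by linarith
    have hev1 : ∀ᶠ n : ℕ in atTop, Real.log ((n : ℝ) + 1) / a n < 1 / (2 * t) :=
      hten.eventually_lt_const (by positivity)
    have hlogtop : Tendsto (fun n : ℕ => Real.log ((n : ℝ) + 1)) atTop atTop :=
      Real.tendsto_log_atTop.comp
        (tendsto_atTop_add_const_right _ 1 tendsto_natCast_atTop_atTop)
    have hev2 : ∀ᶠ n : ℕ in atTop, Real.log C / t < Real.log ((n : ℝ) + 1) :=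
      hlogtop.eventually_gt_atTop _
    obtain ⟨n, hn1, hn2⟩ := (hev1.and hev2).exists
    have hapos : (0 : ℝ) < a n := lt_trans one_pos (h1 n)
    have hcross : Real.log ((n : ℝ) + 1) * (2 * t) < 1 * a n :=
      (div_lt_div_iff₀ hapos h2t).mp hn1
    have hb := hlogb n
    have hlc : Real.log C < t * Real.log ((n : ℝ) + 1) := by
      rw [div_lt_iff₀ ht] at hn2; linarith [hn2]
    nlinarith [hcross, hb, hlc]
  · have hmem : ∀ k : ℕ, s ∈ Sk a k := by
      intro k
      have hle : ∀ n : ℕ, Real.exp (a n / ((k : ℝ) + 1)) / ((n : ℝ) + 1) ^ s ≤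
          Real.exp (a n) / ((n : ℝ) + 1) ^ s := by
        intro n
        have hapos : (0 : ℝ) < a n := lt_trans one_pos (h1 n)
        gcongr
        exact div_le_self hapos.le (by push_cast; linarith [Nat.cast_nonneg (α := ℝ) k])
      exact hs'.of_nonneg_of_le (fun n => by positivity) hle
    have hlow : ∀ k : ℕ, ∀ x ∈ Sk a k, (1 : ℝ) ≤ x := by
      intro k x hx
      simp only [Sk, Set.mem_setOf_eq] at hx
      have hsum : Summable (fun n : ℕ => 1 / ((n : ℝ) + 1) ^ x) := by
        refine hx.of_nonneg_of_le (fun n => by positivity) fun n => ?_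
        gcongr
        refine Real.one_le_exp ?_
        have hapos : (0 : ℝ) < a n := lt_trans one_pos (h1 n)
        positivity
      have hsum' : Summable (fun n : ℕ => 1 / (((n + 1 : ℕ) : ℝ)) ^ x) := by
        refine hsum.congr fun n => ?_; push_cast; ring
      have h2 : Summable (fun n : ℕ => 1 / ((n : ℝ)) ^ x) :=
        (summable_nat_add_iff 1).mp hsum'
      exact (Real.summable_one_div_nat_rpow.mp h2).le
    have hbdd : ∀ k : ℕ, BddBelow (Sk a k) := fun k => ⟨1, fun x hx => hlow k x hx⟩
    have hlow' : ∀ k : ℕ, (1 : ℝ) ≤ sInf (Sk a k) :=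
      fun k => le_csInf ⟨s, hmem k⟩ (hlow k)
    have hrbdd : BddBelow (Set.range fun k : ℕ => sInf (Sk a k)) := by
      refine ⟨1, ?_⟩; rintro _ ⟨k, rfl⟩; exact hlow' k
    refine le_antisymm ?_ (le_ciInf hlow')
    refine le_of_forall_pos_le_add fun ε hε => ?_
    have hspos : (1 : ℝ) ≤ s := hlow 0 s hs
    obtain ⟨k, hk⟩ := exists_nat_gt (s / ε)
    have hk1 : (0 : ℝ) < (k : ℝ) + 1 := by positivity
    have hsk : s / ((k : ℝ) + 1) < ε := by
      rw [div_lt_iff₀ hk1, mul_comm]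
      have h' : s / ε < (k : ℝ) + 1 := hk.trans (lt_add_one _)
      have := (div_lt_iff₀ hε).mp h'
      linarith
    have hmemk : (1 + ε) ∈ Sk a k := by
      simp only [Sk, Set.mem_setOf_eq]
      set r := 1 / ((k : ℝ) + 1) with hrdef
      have hr : (0 : ℝ) < r := by positivity
      have ht' : s * r - (1 + ε) < -1 := by
        have : s * r = s / ((k : ℝ) + 1) := by rw [hrdef]; ring
        rw [this]; linarith
      have hsum2 : Summable (fun n : ℕ => C ^ r * ((n : ℝ) + 1) ^ (s * r - (1 + ε))) :=
        (summable_aux ht').mul_left _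
      refine hsum2.of_nonneg_of_le (fun n => by positivity) fun n => ?_
      have hn1 : (0 : ℝ) < (n : ℝ) + 1 := by positivity
      have hexp : Real.exp (a n / ((k : ℝ) + 1)) ≤ C ^ r * ((n : ℝ) + 1) ^ (s * r) := by
        have h1' : (Real.exp (a n)) ^ r = Real.exp (a n / ((k : ℝ) + 1)) := by
          rw [Real.rpow_def_of_pos (Real.exp_pos _), Real.log_exp, hrdef, mul_one_div]
        rw [← h1']
        calc (Real.exp (a n)) ^ r ≤ (C * ((n : ℝ) + 1) ^ s) ^ r :=
              Real.rpow_le_rpow (Real.exp_pos _).le (hbound n) hr.le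
          _ = C ^ r * ((n : ℝ) + 1) ^ (s * r) := by
              rw [Real.mul_rpow hCpos.le (by positivity), ← Real.rpow_mul hn1.le]
      calc Real.exp (a n / ((k : ℝ) + 1)) / ((n : ℝ) + 1) ^ (1 + ε)
          ≤ (C ^ r * ((n : ℝ) + 1) ^ (s * r)) / ((n : ℝ) + 1) ^ (1 + ε) := by gcongr
        _ = C ^ r * ((n : ℝ) + 1) ^ (s * r - (1 + ε)) := by
            rw [Real.rpow_sub hn1, mul_div_assoc]
    calc (⨅ k : ℕ, sInf (Sk a k)) ≤ sInf (Sk a k) := ciInf_le hrbdd k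
      _ ≤ 1 + ε := csInf_le (hbdd k) hmemk
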